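/- Let T be a symmetric third-order tensor on ℝ^n with an orthogonal decomposition T = Σ_{i=1}^k λ_i v_i^⊗3, where k ≥ 2, {v_1,…,v_k} is orthonormal and each λ_i > 0. Let θ₀ ∈ ℝ^n be such that (after relabeling indices) |λ_1 v_1ᵀθ₀| > |λ_i v_iᵀθ₀| for all i ∈ {2,…,k}, and |λ_2 v_2ᵀθ₀| ≥ |λ_i v_iᵀθ₀| for all i ∈ {2,…,k}. Define θ_t := T(I, θ_{t−1}, θ_{t−1})/‖T(I, θ_{t−1}, θ_{t−1})‖ for t = 1, 2, …. Then this sequence is well-defined, and for every t ≥ 1: ‖v_1 − θ_t‖² ≤ (2λ_1² Σ_{i=2}^k λ_i^{−2}) · |λ_2 v_2ᵀθ₀ / (λ_1 v_1ᵀθ₀)|^{2^{t+1}}. In particular, the tensor power iterations starting from θ₀ converge to v_1 at a quadratic rate. -/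

import Mathlib

open scoped BigOperators

noncomputable section

/-- Euclidean dot product on `ℝ^n`. -/
def dotp {n : ℕ} (u v : Fin n → ℝ) : ℝ := ∑ i, u i * v i

/-- Euclidean norm on `ℝ^n`. -/
def enorm' {n : ℕ} (u : Fin n → ℝ) : ℝ := Real.sqrt (∑ i, (u i) ^ 2)

/-- `T(I,u,u)` for the orthogonally decomposable tensor `T = ∑ i, λ i • (v i)^⊗3`. -/
def tmap {n k : ℕ} (lam : Fin k → ℝ) (v : Fin k → Fin n → ℝ) (u : Fin n → ℝ) :
    Fin n → ℝ :=
  ∑ i, (lam i * (dotp (v i) u) ^ 2) • v i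

/-- The tensor power iteration sequence started at `θ`. -/
def powSeq {n k : ℕ} (lam : Fin k → ℝ) (v : Fin k → Fin n → ℝ) (θ : Fin n → ℝ) :
    ℕ → Fin n → ℝ
  | 0 => θ
  | t + 1 => (enorm' (tmap lam v (powSeq lam v θ t)))⁻¹ • tmap lam v (powSeq lam v θ t)

lemma dotp_comm {n : ℕ} (u w : Fin n → ℝ) : dotp u w = dotp w u := by
  simp [dotp, mul_comm]

lemma dotp_sub {n : ℕ} (u w z : Fin n → ℝ) : dotp u (w - z) = dotp u w - dotp u z := by
  simp [dotp, mul_sub, Finset.sum_sub_distrib]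

lemma dotp_smul {n : ℕ} (r : ℝ) (u w : Fin n → ℝ) : dotp u (r • w) = r * dotp u w := by
  simp only [dotp, Pi.smul_apply, smul_eq_mul]
  rw [Finset.mul_sum]
  exact Finset.sum_congr rfl fun i _ => by ring

lemma dotp_sum_right {n k : ℕ} (u : Fin n → ℝ) (f : Fin k → Fin n → ℝ) :
    dotp u (∑ i, f i) = ∑ i, dotp u (f i) := by
  simp [dotp, Finset.mul_sum]
  rw [Finset.sum_comm]

lemma dotp_self_eq_sq {n : ℕ} (u : Fin n → ℝ) : dotp u u = ∑ i, (u i)^2 := by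
  simp [dotp, sq]

lemma enorm'_sq {n : ℕ} (u : Fin n → ℝ) : (enorm' u) ^ 2 = dotp u u := by
  rw [enorm', Real.sq_sqrt (by positivity), dotp_self_eq_sq]

lemma enorm'_pos {n : ℕ} (u : Fin n → ℝ) (hu : u ≠ 0) : 0 < enorm' u := by
  rw [enorm']
  apply Real.sqrt_pos.2
  rcases Function.ne_iff.1 hu with ⟨i, hi⟩
  have hi' : u i ≠ 0 := by simpa using hi
  have h1 : (0:ℝ) < (u i)^2 := by positivity
  calc (0:ℝ) < (u i)^2 := h1
    _ ≤ ∑ j, (u j)^2 :=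
      Finset.single_le_sum (f := fun j => (u j)^2) (fun j _ => by positivity)
        (Finset.mem_univ i)

lemma dotp_tmap {n k : ℕ} (lam : Fin k → ℝ) (v : Fin k → Fin n → ℝ)
    (horth : ∀ i j, dotp (v i) (v j) = if i = j then 1 else 0)
    (u : Fin n → ℝ) (j : Fin k) :
    dotp (v j) (tmap lam v u) = lam j * (dotp (v j) u) ^ 2 := by
  rw [tmap, dotp_sum_right]
  have h : ∀ i : Fin k, dotp (v j) ((lam i * (dotp (v i) u) ^ 2) • v i)
      = (lam i * (dotp (v i) u) ^ 2) * (if j = i then 1 else 0) := by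
    intro i; rw [dotp_smul, horth]
  simp only [h, mul_ite, mul_one, mul_zero]
  simp

lemma dotp_tmap_self {n k : ℕ} (lam : Fin k → ℝ) (v : Fin k → Fin n → ℝ)
    (horth : ∀ i j, dotp (v i) (v j) = if i = j then 1 else 0)
    (u : Fin n → ℝ) :
    dotp (tmap lam v u) (tmap lam v u) = ∑ i, (lam i * (dotp (v i) u) ^ 2) ^ 2 := by
  rw [show (tmap lam v u : Fin n → ℝ) = ∑ i, (lam i * (dotp (v i) u) ^ 2) • v i from rfl]
  rw [dotp_sum_right]
  apply Finset.sum_congr rfl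
  intro i _
  rw [dotp_smul, dotp_comm (∑ i, (lam i * (dotp (v i) u) ^ 2) • v i) (v i)]
  rw [show (∑ i, (lam i * (dotp (v i) u) ^ 2) • v i : Fin n → ℝ) = tmap lam v u from rfl]
  rw [dotp_tmap lam v horth]
  ring

/-- **Quadratic convergence of the tensor power method.**
Let `T = ∑_{i=1}^k λ_i v_i^⊗3` (orthonormal `v_i`, `λ_i > 0`, `k ≥ 2`), and suppose the
starting point `θ₀` satisfies `|λ_1 v_1ᵀθ₀| > |λ_i v_iᵀθ₀|` for all `i ≠ 1`, with
`|λ_2 v_2ᵀθ₀|` the second largest of these values.  Then the power iteration sequence is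
well defined, and for every `t ≥ 1`,
`‖v_1 − θ_t‖² ≤ (2 λ_1² ∑_{i≥2} λ_i⁻²) · |λ_2 v_2ᵀθ₀/(λ_1 v_1ᵀθ₀)|^(2^(t+1))`.
(The indices `1` and `2` of the paper are `0` and `1 : Fin k` here.) -/
theorem stmt10 {n k : ℕ} [NeZero k] (hk : 2 ≤ k)
    (lam : Fin k → ℝ) (hlam : ∀ i, 0 < lam i)
    (v : Fin k → Fin n → ℝ)
    (horth : ∀ i j, dotp (v i) (v j) = if i = j then 1 else 0)
    (θ₀ : Fin n → ℝ)
    (hmax : ∀ i : Fin k, i ≠ 0 → |lam i * dotp (v i) θ₀| < |lam 0 * dotp (v 0) θ₀|)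
    (hsecond : ∀ i : Fin k, i ≠ 0 →
      |lam i * dotp (v i) θ₀| ≤ |lam 1 * dotp (v 1) θ₀|) :
    (∀ t, tmap lam v (powSeq lam v θ₀ t) ≠ 0) ∧
    ∀ t : ℕ, 1 ≤ t →
      (enorm' (v 0 - powSeq lam v θ₀ t)) ^ 2
        ≤ (2 * (lam 0) ^ 2 * ∑ i ∈ Finset.univ.erase (0 : Fin k), ((lam i) ^ 2)⁻¹)
          * |lam 1 * dotp (v 1) θ₀ / (lam 0 * dotp (v 0) θ₀)| ^ (2 ^ (t + 1)) := by
  set θf := powSeq lam v θ₀ with hθf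
  have h10 : (1 : Fin k) ≠ 0 := by
    intro h
    have h2 : ((1 : Fin k) : ℕ) = ((0 : Fin k) : ℕ) := congrArg Fin.val h
    rw [Fin.val_one', Fin.val_zero, Nat.mod_eq_of_lt (by omega)] at h2
    exact one_ne_zero h2
  have hc00 : ∀ i : Fin k, dotp (v i) (θf 0) = dotp (v i) θ₀ := fun i => rfl
  have habs0 : 0 < |lam 0 * dotp (v 0) θ₀| :=
    (abs_nonneg _).trans_lt (hmax 1 h10)
  -- recurrence for coordinates
  have hrec : ∀ t (i : Fin k), dotp (v i) (θf (t+1))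
      = (enorm' (tmap lam v (θf t)))⁻¹ * (lam i * (dotp (v i) (θf t)) ^ 2) := by
    intro t i
    show dotp (v i) ((enorm' (tmap lam v (θf t)))⁻¹ • tmap lam v (θf t)) = _
    rw [dotp_smul, dotp_tmap lam v horth]
  -- tmap nonzero when leading coordinate nonzero
  have hwne : ∀ t, dotp (v 0) (θf t) ≠ 0 → tmap lam v (θf t) ≠ 0 := by
    intro t h hcon
    have h2 := dotp_tmap lam v horth (θf t) 0
    rw [hcon] at h2
    have h3 : dotp (v 0) (0 : Fin n → ℝ) = 0 := by simp [dotp]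
    rw [h3] at h2
    exact (mul_ne_zero (hlam 0).ne' (pow_ne_zero 2 h)) h2.symm
  -- leading coordinate never vanishes
  have hcne : ∀ t, dotp (v 0) (θf t) ≠ 0 := by
    intro t
    induction t with
    | zero =>
      rw [hc00]
      intro h
      rw [h, mul_zero, abs_zero] at habs0
      exact lt_irrefl 0 habs0
    | succ t ih =>
      have hN : 0 < enorm' (tmap lam v (θf t)) := enorm'_pos _ (hwne t ih)
      rw [hrec t 0]
      exact mul_ne_zero (inv_ne_zero hN.ne') (mul_ne_zero (hlam 0).ne' (pow_ne_zero 2 ih))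
  have hw : ∀ t, tmap lam v (θf t) ≠ 0 := fun t => hwne t (hcne t)
  refine ⟨hw, ?_⟩
  -- the ratio bound
  have hratio : ∀ t, ∀ i : Fin k, i ≠ 0 →
      |lam i * dotp (v i) (θf t)| * |lam 0 * dotp (v 0) θ₀| ^ 2 ^ t
        ≤ |lam 0 * dotp (v 0) (θf t)| * |lam 1 * dotp (v 1) θ₀| ^ 2 ^ t := by
    intro t
    induction t with
    | zero =>
      intro i hi
      simp only [pow_zero, pow_one, hc00]
      have h1 := hsecond i hi
      have h2 := abs_nonneg (lam 0 * dotp (v 0) θ₀)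
      nlinarith [abs_nonneg (lam i * dotp (v i) θ₀)]
    | succ t ih =>
      intro i hi
      have hN : 0 < enorm' (tmap lam v (θf t)) := enorm'_pos _ (hw t)
      set N := enorm' (tmap lam v (θf t)) with hNdef
      have e1 : lam i * dotp (v i) (θf (t+1)) = N⁻¹ * (lam i * dotp (v i) (θf t))^2 := by
        rw [hrec]; ring
      have e0 : lam 0 * dotp (v 0) (θf (t+1)) = N⁻¹ * (lam 0 * dotp (v 0) (θf t))^2 := by
        rw [hrec]; ring
      have l1 : |lam i * dotp (v i) (θf (t+1))| = N⁻¹ * |lam i * dotp (v i) (θf t)|^2 := by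
        rw [e1, abs_mul, abs_inv, abs_of_pos hN, abs_pow]
      have l0 : |lam 0 * dotp (v 0) (θf (t+1))| = N⁻¹ * |lam 0 * dotp (v 0) (θf t)|^2 := by
        rw [e0, abs_mul, abs_inv, abs_of_pos hN, abs_pow]
      have l3 : ∀ x : ℝ, |x| ^ 2 ^ (t+1) = (|x| ^ 2 ^ t) ^ 2 := by
        intro x; rw [← pow_mul, ← pow_succ]
      have hIH := ih i hi
      have hsq : (|lam i * dotp (v i) (θf t)| * |lam 0 * dotp (v 0) θ₀| ^ 2 ^ t) ^ 2
          ≤ (|lam 0 * dotp (v 0) (θf t)| * |lam 1 * dotp (v 1) θ₀| ^ 2 ^ t) ^ 2 :=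
        pow_le_pow_left₀ (by positivity) hIH 2
      have h5 := mul_le_mul_of_nonneg_left hsq (inv_nonneg.2 hN.le)
      calc |lam i * dotp (v i) (θf (t+1))| * |lam 0 * dotp (v 0) θ₀| ^ 2 ^ (t+1)
          = N⁻¹ * ((|lam i * dotp (v i) (θf t)| * |lam 0 * dotp (v 0) θ₀| ^ 2 ^ t) ^ 2) := by
            rw [l1, l3]; ring
        _ ≤ N⁻¹ * ((|lam 0 * dotp (v 0) (θf t)| * |lam 1 * dotp (v 1) θ₀| ^ 2 ^ t) ^ 2) := h5
        _ = |lam 0 * dotp (v 0) (θf (t+1))| * |lam 1 * dotp (v 1) θ₀| ^ 2 ^ (t+1) := by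
            rw [l0, l3]; ring
  -- main bound
  intro t ht
  obtain ⟨s, rfl⟩ : ∃ s, t = s + 1 := ⟨t - 1, by omega⟩
  have hN : 0 < enorm' (tmap lam v (θf s)) := enorm'_pos _ (hw s)
  set N := enorm' (tmap lam v (θf s)) with hNdef
  have hNsq : N ^ 2 = ∑ i, (lam i * (dotp (v i) (θf s)) ^ 2) ^ 2 := by
    rw [hNdef, enorm'_sq, dotp_tmap_self lam v horth]
  have hsum1 : ∑ i, (dotp (v i) (θf (s+1))) ^ 2 = 1 := by
    have h : ∀ i : Fin k, (dotp (v i) (θf (s+1))) ^ 2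
        = (N⁻¹) ^ 2 * (lam i * (dotp (v i) (θf s)) ^ 2) ^ 2 := by
      intro i; rw [hrec s i]; ring
    rw [Finset.sum_congr rfl (fun i _ => h i), ← Finset.mul_sum, ← hNsq]
    field_simp
  have hc0pos : 0 < dotp (v 0) (θf (s+1)) := by
    rw [hrec s 0]
    have h2 : (0:ℝ) < (dotp (v 0) (θf s)) ^ 2 :=
      lt_of_le_of_ne (sq_nonneg _) (Ne.symm (pow_ne_zero 2 (hcne s)))
    exact mul_pos (inv_pos.2 hN) (mul_pos (hlam 0) h2)
  have hc0sq : (dotp (v 0) (θf (s+1))) ^ 2 ≤ 1 := by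
    rw [← hsum1]
    exact Finset.single_le_sum (f := fun i => (dotp (v i) (θf (s+1)))^2)
      (fun i _ => sq_nonneg _) (Finset.mem_univ 0)
  have hc0le1 : dotp (v 0) (θf (s+1)) ≤ 1 := by nlinarith
  have hθθ : dotp (θf (s+1)) (θf (s+1)) = 1 := by
    show dotp (N⁻¹ • tmap lam v (θf s)) (N⁻¹ • tmap lam v (θf s)) = 1
    rw [dotp_smul, dotp_comm (N⁻¹ • tmap lam v (θf s)) (tmap lam v (θf s)), dotp_smul,
      ← enorm'_sq, ← hNdef]
    field_simp
  have hnorm : enorm' (v 0 - θf (s+1)) ^ 2 = 2 - 2 * dotp (v 0) (θf (s+1)) := by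
    rw [enorm'_sq, dotp_sub, dotp_comm (v 0 - θf (s+1)) (v 0),
      dotp_comm (v 0 - θf (s+1)) (θf (s+1)), dotp_sub, dotp_sub,
      dotp_comm (θf (s+1)) (v 0), hθθ]
    have h00 : dotp (v 0) (v 0) = 1 := by rw [horth]; simp
    rw [h00]; ring
  -- per-term bound
  have hterm : ∀ i ∈ Finset.univ.erase (0 : Fin k),
      (dotp (v i) (θf (s+1))) ^ 2
        ≤ (lam 0) ^ 2 * ((lam i) ^ 2)⁻¹
          * |lam 1 * dotp (v 1) θ₀ / (lam 0 * dotp (v 0) θ₀)| ^ 2 ^ (s+1+1) := by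
    intro i hi'
    have hi : i ≠ 0 := Finset.ne_of_mem_erase hi'
    have h1 := hratio (s+1) i hi
    have hE : (2:ℕ) ^ (s+1+1) = 2 ^ (s+1) * 2 := pow_succ 2 (s+1)
    have hsqr : (|lam i * dotp (v i) (θf (s+1))| * |lam 0 * dotp (v 0) θ₀| ^ 2 ^ (s+1)) ^ 2
        ≤ (|lam 0 * dotp (v 0) (θf (s+1))| * |lam 1 * dotp (v 1) θ₀| ^ 2 ^ (s+1)) ^ 2 :=
      pow_le_pow_left₀ (by positivity) h1 2
    have hL : (|lam i * dotp (v i) (θf (s+1))| * |lam 0 * dotp (v 0) θ₀| ^ 2 ^ (s+1)) ^ 2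
        = (lam i)^2 * (dotp (v i) (θf (s+1)))^2 * |lam 0 * dotp (v 0) θ₀| ^ 2 ^ (s+1+1) := by
      rw [hE, pow_mul, mul_pow, sq_abs, abs_mul]; ring
    have hR : (|lam 0 * dotp (v 0) (θf (s+1))| * |lam 1 * dotp (v 1) θ₀| ^ 2 ^ (s+1)) ^ 2
        = (lam 0)^2 * (dotp (v 0) (θf (s+1)))^2 * |lam 1 * dotp (v 1) θ₀| ^ 2 ^ (s+1+1) := by
      rw [hE, pow_mul, mul_pow, sq_abs, abs_mul]; ring
    rw [hL, hR] at hsqr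
    have hR2 : (lam 0)^2 * (dotp (v 0) (θf (s+1)))^2 * |lam 1 * dotp (v 1) θ₀| ^ 2 ^ (s+1+1)
        ≤ (lam 0)^2 * |lam 1 * dotp (v 1) θ₀| ^ 2 ^ (s+1+1) := by
      have hpow : (0:ℝ) ≤ |lam 1 * dotp (v 1) θ₀| ^ 2 ^ (s+1+1) := by positivity
      have hmm := mul_nonneg (mul_nonneg (sq_nonneg (lam 0)) hpow) (sub_nonneg.2 hc0sq)
      nlinarith [hmm]
    have hkey : (dotp (v i) (θf (s+1)))^2 * ((lam i)^2 * |lam 0 * dotp (v 0) θ₀| ^ 2 ^ (s+1+1))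
        ≤ (lam 0)^2 * |lam 1 * dotp (v 1) θ₀| ^ 2 ^ (s+1+1) := by
      calc (dotp (v i) (θf (s+1)))^2 * ((lam i)^2 * |lam 0 * dotp (v 0) θ₀| ^ 2 ^ (s+1+1))
          = (lam i)^2 * (dotp (v i) (θf (s+1)))^2 * |lam 0 * dotp (v 0) θ₀| ^ 2 ^ (s+1+1) := by ring
        _ ≤ (lam 0)^2 * (dotp (v 0) (θf (s+1)))^2 * |lam 1 * dotp (v 1) θ₀| ^ 2 ^ (s+1+1) := hsqr
        _ ≤ (lam 0)^2 * |lam 1 * dotp (v 1) θ₀| ^ 2 ^ (s+1+1) := hR2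
    have hpos : (0:ℝ) < (lam i)^2 * |lam 0 * dotp (v 0) θ₀| ^ 2 ^ (s+1+1) := by
      have := hlam i
      positivity
    have hdiv : (dotp (v i) (θf (s+1)))^2
        ≤ ((lam 0)^2 * |lam 1 * dotp (v 1) θ₀| ^ 2 ^ (s+1+1))
          / ((lam i)^2 * |lam 0 * dotp (v 0) θ₀| ^ 2 ^ (s+1+1)) :=
      (le_div_iff₀ hpos).2 hkey
    refine hdiv.trans (le_of_eq ?_)
    rw [abs_div, div_pow]
    have hlami : (lam i) ≠ 0 := (hlam i).ne'
    have hA : |lam 0 * dotp (v 0) θ₀| ≠ 0 := habs0.ne'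
    field_simp
  -- put it all together
  have hsplit : ∑ i ∈ Finset.univ.erase (0 : Fin k), (dotp (v i) (θf (s+1))) ^ 2
      = 1 - (dotp (v 0) (θf (s+1))) ^ 2 := by
    have h : (∑ i ∈ Finset.univ.erase (0 : Fin k), (dotp (v i) (θf (s+1)))^2)
        + (dotp (v 0) (θf (s+1)))^2 = ∑ i, (dotp (v i) (θf (s+1)))^2 :=
      Finset.sum_erase_add Finset.univ _ (Finset.mem_univ (0 : Fin k))
    rw [hsum1] at h
    linarith
  have hsumle := Finset.sum_le_sum hterm
  calc enorm' (v 0 - θf (s+1)) ^ 2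
      = 2 - 2 * dotp (v 0) (θf (s+1)) := hnorm
    _ ≤ 2 * (1 - (dotp (v 0) (θf (s+1))) ^ 2) := by nlinarith
    _ = 2 * ∑ i ∈ Finset.univ.erase (0 : Fin k), (dotp (v i) (θf (s+1))) ^ 2 := by
        rw [hsplit]
    _ ≤ 2 * ∑ i ∈ Finset.univ.erase (0 : Fin k), (lam 0) ^ 2 * ((lam i) ^ 2)⁻¹
          * |lam 1 * dotp (v 1) θ₀ / (lam 0 * dotp (v 0) θ₀)| ^ 2 ^ (s+1+1) := by
        linarith
    _ = (2 * (lam 0) ^ 2 * ∑ i ∈ Finset.univ.erase (0 : Fin k), ((lam i) ^ 2)⁻¹)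
          * |lam 1 * dotp (v 1) θ₀ / (lam 0 * dotp (v 0) θ₀)| ^ 2 ^ (s+1+1) := by
        rw [Finset.mul_sum, Finset.mul_sum, Finset.sum_mul]
        apply Finset.sum_congr rfl
        intro i _
        ring

end
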